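/- The process r̄(k) = (r(k), s(k), σ(k), ⌊k+1−τ(k)⌋_T), k ≥ 0, is a time-homogeneous Markov chain on X̄ with transition matrix p̄: for every k ≥ 0, every χ₀, …, χ_k ∈ X̄ with ℙ(r̄(0)=χ₀, …, r̄(k)=χ_k) > 0, and every χ' ∈ X̄, one has ℙ(r̄(k+1)=χ' | r̄(k)=χ_k, r̄(k−1)=χ_{k−1}, …, r̄(0)=χ₀) = p̄_{χ_k, χ'}; in particular this conditional probability depends only on χ_k and χ' and not on k or on the earlier history. -/

import Mathlib

open MeasureTheory ProbabilityTheory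

/-- `flT T k : Fin T` represents `⌊k⌋_T`, the unique element of `{1,…,T}` such that
`k − ⌊k⌋_T` is divisible by `T`; the element `d : Fin T` encodes the value `d.val + 1`. -/
def flT (T : ℕ) [NeZero T] (k : ℤ) : Fin T :=
  ⟨((k - 1) % (T : ℤ)).toNat, by
    have hT : (0:ℤ) < (T:ℤ) := by exact_mod_cast Nat.pos_of_ne_zero (NeZero.ne T)
    have h1 : 0 ≤ (k - 1) % (T:ℤ) := Int.emod_nonneg _ (ne_of_gt hT)
    have h2 : (k - 1) % (T:ℤ) < (T:ℤ) := Int.emod_lt_of_pos _ hT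
    omega⟩

/-- `τ(k)`: the most recent observation time `≤ k`, i.e. the largest `j ≤ k` with
`s j ∈ Λ`, and `τ₀` if no observation has occurred yet. -/
noncomputable def tauProc {M : ℕ} {Ω : Type*} (Λ : Set (Fin M)) (s : ℕ → Ω → Fin M)
    (τ0 : ℤ) (k : ℕ) (ω : Ω) : ℤ := by
  classical
  exact if ∃ j ≤ k, s j ω ∈ Λ then
    ((Nat.findGreatest (fun j => s j ω ∈ Λ) k : ℕ) : ℤ) else τ0

/-- `σ(k) = r(τ(k))` for `k ≥ t₀` and `σ₀` before the first observation. -/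
noncomputable def sigmaProc {N M : ℕ} {Ω : Type*} (Λ : Set (Fin M))
    (r : ℕ → Ω → Fin N) (s : ℕ → Ω → Fin M) (σ0 : Fin N) (k : ℕ) (ω : Ω) : Fin N := by
  classical
  exact if ∃ j ≤ k, s j ω ∈ Λ then r (Nat.findGreatest (fun j => s j ω ∈ Λ) k) ω else σ0

/-- The extended process `r̄(k) = (r(k), s(k), σ(k), ⌊k+1−τ(k)⌋_T)`. -/
noncomputable def rbar {N M : ℕ} (T : ℕ) [NeZero T] {Ω : Type*} (Λ : Set (Fin M))
    (r : ℕ → Ω → Fin N) (s : ℕ → Ω → Fin M) (τ0 : ℤ) (σ0 : Fin N) (k : ℕ) (ω : Ω) :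
    Fin N × Fin M × Fin N × Fin T :=
  (r k ω, s k ω, sigmaProc Λ r s σ0 k ω, flT T ((k : ℤ) + 1 - tauProc Λ s τ0 k ω))

/-- The transition matrix `p̄` on `X̄ = {1,…,N} × {1,…,M} × {1,…,N} × {1,…,T}`.
Recall that `δ : Fin T` encodes the value `δ.val + 1`, so `flT T 1 = 0` encodes the
value `1` and `δ + 1` (cyclic `Fin` addition) encodes `⌊δ + 1⌋_T`. -/
noncomputable def pbar {N M T : ℕ} [NeZero T] (P : Matrix (Fin N) (Fin N) ℝ)
    (Q : Matrix (Fin M) (Fin M) ℝ) (Λ : Set (Fin M))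
    (χ χ' : Fin N × Fin M × Fin N × Fin T) : ℝ := by
  classical
  exact
    if χ'.2.1 ∈ Λ then
      if χ'.1 = χ'.2.2.1 ∧ χ'.2.2.2 = flT T 1 then P χ.1 χ'.1 * Q χ.2.1 χ'.2.1 else 0
    else
      if χ'.2.2.1 = χ.2.2.1 ∧ χ'.2.2.2 = χ.2.2.2 + 1 then P χ.1 χ'.1 * Q χ.2.1 χ'.2.1 else 0

/-- A row-stochastic matrix. -/
def RowStochastic {I : Type*} [Fintype I] (P : I → I → ℝ) : Prop :=
  (∀ i j, 0 ≤ P i j) ∧ ∀ i, ∑ j, P i j = 1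

/-- The pair `(r, s)` is a time-homogeneous Markov chain with product transition
probabilities `P ⊗ Q`: conditional on any history of positive probability. -/
def IsPairMarkov {N M : ℕ} {Ω : Type*} [MeasurableSpace Ω] (μ : Measure Ω)
    (r : ℕ → Ω → Fin N) (s : ℕ → Ω → Fin M)
    (P : Matrix (Fin N) (Fin N) ℝ) (Q : Matrix (Fin M) (Fin M) ℝ) : Prop :=
  ∀ (k : ℕ) (a : ℕ → Fin N) (b : ℕ → Fin M),
    μ {ω | ∀ j ≤ k, r j ω = a j ∧ s j ω = b j} ≠ 0 →
    ∀ (α' : Fin N) (β' : Fin M),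
      ProbabilityTheory.cond μ {ω | ∀ j ≤ k, r j ω = a j ∧ s j ω = b j}
          {ω | r (k+1) ω = α' ∧ s (k+1) ω = β'}
        = ENNReal.ofReal (P (a k) α' * Q (b k) β')

/-- A time-homogeneous Markov chain on a (finite) state space `S` with transition
matrix `P`. -/
def IsMarkov {S : Type*} {Ω : Type*} [MeasurableSpace Ω] (μ : Measure Ω)
    (X : ℕ → Ω → S) (P : S → S → ℝ) : Prop :=
  ∀ (k : ℕ) (c : ℕ → S),
    μ {ω | ∀ i ≤ k, X i ω = c i} ≠ 0 →
    ∀ j : S,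
      ProbabilityTheory.cond μ {ω | ∀ i ≤ k, X i ω = c i} {ω | X (k+1) ω = j}
        = ENNReal.ofReal (P (c k) j)

section AuxDet

variable {N M T : ℕ} {Ω : Type*}

lemma findGreatest_congr' {p q : ℕ → Prop} [DecidablePred p] [DecidablePred q] :
    ∀ (k : ℕ), (∀ j, j ≤ k → (p j ↔ q j)) → Nat.findGreatest p k = Nat.findGreatest q k := by
  intro k
  induction k with
  | zero => intro _; rfl
  | succ n ih =>
    intro h
    rw [Nat.findGreatest_succ, Nat.findGreatest_succ]
    by_cases hp : p (n+1)
    · rw [if_pos hp, if_pos ((h (n+1) le_rfl).mp hp)]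
    · rw [if_neg hp, if_neg (fun hq => hp ((h (n+1) le_rfl).mpr hq))]
      exact ih (fun j hj => h j (le_trans hj (Nat.le_succ n)))

lemma tauProc_congr {Λ : Set (Fin M)} {s : ℕ → Ω → Fin M} {τ0 : ℤ} {k : ℕ} {ω ω' : Ω}
    (h : ∀ j, j ≤ k → s j ω = s j ω') : tauProc Λ s τ0 k ω = tauProc Λ s τ0 k ω' := by
  classical
  have hiff : ∀ j, j ≤ k → ((s j ω ∈ Λ) ↔ (s j ω' ∈ Λ)) := fun j hj => by rw [h j hj]
  have hfg : Nat.findGreatest (fun j => s j ω ∈ Λ) k = Nat.findGreatest (fun j => s j ω' ∈ Λ) k :=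
    findGreatest_congr' k hiff
  have hex : (∃ j ≤ k, s j ω ∈ Λ) ↔ (∃ j ≤ k, s j ω' ∈ Λ) := by
    constructor
    · rintro ⟨j, hj, hm⟩; exact ⟨j, hj, (hiff j hj).mp hm⟩
    · rintro ⟨j, hj, hm⟩; exact ⟨j, hj, (hiff j hj).mpr hm⟩
  simp only [tauProc]
  by_cases hc : ∃ j ≤ k, s j ω ∈ Λ
  · rw [if_pos hc, if_pos (hex.mp hc), hfg]
  · rw [if_neg hc, if_neg (fun hc' => hc (hex.mpr hc'))]

lemma sigmaProc_congr {Λ : Set (Fin M)} {r : ℕ → Ω → Fin N} {s : ℕ → Ω → Fin M} {σ0 : Fin N}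
    {k : ℕ} {ω ω' : Ω} (hr : ∀ j, j ≤ k → r j ω = r j ω')
    (hs : ∀ j, j ≤ k → s j ω = s j ω') :
    sigmaProc Λ r s σ0 k ω = sigmaProc Λ r s σ0 k ω' := by
  classical
  have hiff : ∀ j, j ≤ k → ((s j ω ∈ Λ) ↔ (s j ω' ∈ Λ)) := fun j hj => by rw [hs j hj]
  have hfg : Nat.findGreatest (fun j => s j ω ∈ Λ) k = Nat.findGreatest (fun j => s j ω' ∈ Λ) k :=
    findGreatest_congr' k hiff
  have hex : (∃ j ≤ k, s j ω ∈ Λ) ↔ (∃ j ≤ k, s j ω' ∈ Λ) := by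
    constructor
    · rintro ⟨j, hj, hm⟩; exact ⟨j, hj, (hiff j hj).mp hm⟩
    · rintro ⟨j, hj, hm⟩; exact ⟨j, hj, (hiff j hj).mpr hm⟩
  simp only [sigmaProc]
  by_cases hc : ∃ j ≤ k, s j ω ∈ Λ
  · rw [if_pos hc, if_pos (hex.mp hc), ← hfg,
      hr _ (Nat.findGreatest_le k)]
  · rw [if_neg hc, if_neg (fun hc' => hc (hex.mpr hc'))]

lemma rbar_congr [NeZero T] {Λ : Set (Fin M)} {r : ℕ → Ω → Fin N} {s : ℕ → Ω → Fin M}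
    {τ0 : ℤ} {σ0 : Fin N} {k : ℕ} {ω ω' : Ω}
    (hr : ∀ j, j ≤ k → r j ω = r j ω') (hs : ∀ j, j ≤ k → s j ω = s j ω') :
    rbar T Λ r s τ0 σ0 k ω = rbar T Λ r s τ0 σ0 k ω' := by
  unfold rbar
  rw [hr k le_rfl, hs k le_rfl, sigmaProc_congr hr hs, tauProc_congr hs]

lemma tauProc_succ_mem {Λ : Set (Fin M)} {s : ℕ → Ω → Fin M} {τ0 : ℤ} {k : ℕ} {ω : Ω}
    (h : s (k+1) ω ∈ Λ) : tauProc Λ s τ0 (k+1) ω = ((k+1 : ℕ) : ℤ) := by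
  classical
  simp only [tauProc]
  rw [if_pos ⟨k+1, le_rfl, h⟩, Nat.findGreatest_succ, if_pos h]

lemma tauProc_succ_not {Λ : Set (Fin M)} {s : ℕ → Ω → Fin M} {τ0 : ℤ} {k : ℕ} {ω : Ω}
    (h : s (k+1) ω ∉ Λ) : tauProc Λ s τ0 (k+1) ω = tauProc Λ s τ0 k ω := by
  classical
  have hex : (∃ j ≤ k+1, s j ω ∈ Λ) ↔ (∃ j ≤ k, s j ω ∈ Λ) := by
    constructor
    · rintro ⟨j, hj, hm⟩
      rcases Nat.lt_succ_iff_lt_or_eq.mp (Nat.lt_succ_of_le hj) with h' | h'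
      · exact ⟨j, Nat.lt_succ_iff.mp h', hm⟩
      · exact absurd hm (h' ▸ h)
    · rintro ⟨j, hj, hm⟩; exact ⟨j, le_trans hj (Nat.le_succ k), hm⟩
  simp only [tauProc]
  by_cases hc : ∃ j ≤ k, s j ω ∈ Λ
  · rw [if_pos (hex.mpr hc), if_pos hc, Nat.findGreatest_succ, if_neg h]
  · rw [if_neg (fun hc' => hc (hex.mp hc')), if_neg hc]

lemma sigmaProc_succ_mem {Λ : Set (Fin M)} {r : ℕ → Ω → Fin N} {s : ℕ → Ω → Fin M}
    {σ0 : Fin N} {k : ℕ} {ω : Ω} (h : s (k+1) ω ∈ Λ) :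
    sigmaProc Λ r s σ0 (k+1) ω = r (k+1) ω := by
  classical
  simp only [sigmaProc]
  rw [if_pos ⟨k+1, le_rfl, h⟩, Nat.findGreatest_succ, if_pos h]

lemma sigmaProc_succ_not {Λ : Set (Fin M)} {r : ℕ → Ω → Fin N} {s : ℕ → Ω → Fin M}
    {σ0 : Fin N} {k : ℕ} {ω : Ω} (h : s (k+1) ω ∉ Λ) :
    sigmaProc Λ r s σ0 (k+1) ω = sigmaProc Λ r s σ0 k ω := by
  classical
  have hex : (∃ j ≤ k+1, s j ω ∈ Λ) ↔ (∃ j ≤ k, s j ω ∈ Λ) := by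
    constructor
    · rintro ⟨j, hj, hm⟩
      rcases Nat.lt_succ_iff_lt_or_eq.mp (Nat.lt_succ_of_le hj) with h' | h'
      · exact ⟨j, Nat.lt_succ_iff.mp h', hm⟩
      · exact absurd hm (h' ▸ h)
    · rintro ⟨j, hj, hm⟩; exact ⟨j, le_trans hj (Nat.le_succ k), hm⟩
  simp only [sigmaProc]
  by_cases hc : ∃ j ≤ k, s j ω ∈ Λ
  · rw [if_pos (hex.mpr hc), if_pos hc, Nat.findGreatest_succ, if_neg h]
  · rw [if_neg (fun hc' => hc (hex.mp hc')), if_neg hc]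

lemma flT_succ (T : ℕ) [NeZero T] (x : ℤ) : flT T (x + 1) = flT T x + 1 := by
  have hT : (0:ℤ) < (T:ℤ) := by exact_mod_cast Nat.pos_of_ne_zero (NeZero.ne T)
  have h1 : 0 ≤ (x - 1) % (T:ℤ) := Int.emod_nonneg _ (ne_of_gt hT)
  apply Fin.ext
  rw [Fin.add_def]
  show ((x + 1 - 1) % (T:ℤ)).toNat = (((x - 1) % (T:ℤ)).toNat + (1 : Fin T).val) % T
  rw [Fin.val_one']
  have key : ((x + 1 - 1) % (T:ℤ)) = ((((((x - 1) % (T:ℤ)).toNat + 1 % T) % T : ℕ)) : ℤ) := by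
    push_cast [Int.toNat_of_nonneg h1]
    rw [show x + 1 - 1 = (x - 1) + 1 by ring, Int.add_emod]
  rw [key, Int.toNat_natCast]

end AuxDet
section AuxRbar

variable {N M T : ℕ} {Ω : Type*}

lemma rbar_succ_mem [NeZero T] {Λ : Set (Fin M)} {r : ℕ → Ω → Fin N} {s : ℕ → Ω → Fin M}
    {τ0 : ℤ} {σ0 : Fin N} {k : ℕ} {ω : Ω} (h : s (k+1) ω ∈ Λ) :
    rbar T Λ r s τ0 σ0 (k+1) ω = (r (k+1) ω, s (k+1) ω, r (k+1) ω, flT T 1) := by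
  unfold rbar
  rw [sigmaProc_succ_mem h, tauProc_succ_mem h,
    show (((k+1 : ℕ) : ℤ) + 1 - ((k+1 : ℕ) : ℤ)) = 1 by ring]

lemma rbar_succ_not [NeZero T] {Λ : Set (Fin M)} {r : ℕ → Ω → Fin N} {s : ℕ → Ω → Fin M}
    {τ0 : ℤ} {σ0 : Fin N} {k : ℕ} {ω : Ω} (h : s (k+1) ω ∉ Λ) :
    rbar T Λ r s τ0 σ0 (k+1) ω
      = (r (k+1) ω, s (k+1) ω, sigmaProc Λ r s σ0 k ω,
         flT T ((k : ℤ) + 1 - tauProc Λ s τ0 k ω) + 1) := by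
  unfold rbar
  rw [sigmaProc_succ_not h, tauProc_succ_not h,
    show (((k+1 : ℕ) : ℤ) + 1 - tauProc Λ s τ0 k ω)
        = ((k : ℤ) + 1 - tauProc Λ s τ0 k ω) + 1 by push_cast; ring,
    flT_succ]

end AuxRbar
section AuxMeas

open Set

variable {N M : ℕ} {Ω : Type*} [MeasurableSpace Ω]

lemma restrict_C (μ : Measure Ω) [IsProbabilityMeasure μ]
    {r : ℕ → Ω → Fin N} {s : ℕ → Ω → Fin M} {P : Matrix (Fin N) (Fin N) ℝ}
    {Q : Matrix (Fin M) (Fin M) ℝ} (hM : IsPairMarkov μ r s P Q)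
    (k : ℕ) (a : ℕ → Fin N) (b : ℕ → Fin M)
    (hpos : μ {ω | ∀ j ≤ k, r j ω = a j ∧ s j ω = b j} ≠ 0) (α : Fin N) (β : Fin M) :
    μ.restrict {ω | ∀ j ≤ k, r j ω = a j ∧ s j ω = b j} {ω | r (k+1) ω = α ∧ s (k+1) ω = β}
      = μ {ω | ∀ j ≤ k, r j ω = a j ∧ s j ω = b j}
          * ENNReal.ofReal (P (a k) α * Q (b k) β) := by
  have h := hM k a b hpos α β
  set A := {ω | ∀ j ≤ k, r j ω = a j ∧ s j ω = b j}
  set C := {ω | r (k+1) ω = α ∧ s (k+1) ω = β}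
  rw [ProbabilityTheory.cond, Measure.smul_apply, smul_eq_mul] at h
  calc μ.restrict A C = (μ A * (μ A)⁻¹) * μ.restrict A C := by
        rw [ENNReal.mul_inv_cancel hpos (measure_ne_top μ A), one_mul]
    _ = μ A * ((μ A)⁻¹ * μ.restrict A C) := by ring
    _ = μ A * ENNReal.ofReal (P (a k) α * Q (b k) β) := by rw [h]

lemma pair_step (μ : Measure Ω) [IsProbabilityMeasure μ]
    {r : ℕ → Ω → Fin N} {s : ℕ → Ω → Fin M} {P : Matrix (Fin N) (Fin N) ℝ}
    {Q : Matrix (Fin M) (Fin M) ℝ}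
    (hP : RowStochastic P) (hQ : RowStochastic Q) (hM : IsPairMarkov μ r s P Q)
    (k : ℕ) (a : ℕ → Fin N) (b : ℕ → Fin M)
    (hpos : μ {ω | ∀ j ≤ k, r j ω = a j ∧ s j ω = b j} ≠ 0) :
    ∀ α : Fin N, ∀ β : Fin M,
    μ ({ω | ∀ j ≤ k, r j ω = a j ∧ s j ω = b j} ∩ {ω | r (k+1) ω = α ∧ s (k+1) ω = β})
      = μ {ω | ∀ j ≤ k, r j ω = a j ∧ s j ω = b j}
          * ENNReal.ofReal (P (a k) α * Q (b k) β) := by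
  classical
  set A := {ω | ∀ j ≤ k, r j ω = a j ∧ s j ω = b j} with hA
  set C : Fin N × Fin M → Set Ω := fun p => {ω | r (k+1) ω = p.1 ∧ s (k+1) ω = p.2} with hC
  set t : Fin N × Fin M → ENNReal := fun p => μ (A ∩ C p) with ht
  set u : Fin N × Fin M → ENNReal :=
    fun p => μ A * ENNReal.ofReal (P (a k) p.1 * Q (b k) p.2) with hu
  have hle : ∀ p, t p ≤ u p := by
    intro p
    calc t p = μ (C p ∩ A) := by rw [ht]; rw [Set.inter_comm]
      _ ≤ μ.restrict A (C p) := Measure.le_restrict_apply _ _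
      _ = u p := restrict_C μ hM k a b hpos p.1 p.2
  have hsumu : ∑ p : Fin N × Fin M, u p = μ A := by
    rw [← Finset.mul_sum]
    have : ∑ p : Fin N × Fin M, ENNReal.ofReal (P (a k) p.1 * Q (b k) p.2) = 1 := by
      rw [← ENNReal.ofReal_sum_of_nonneg (fun p _ => mul_nonneg (hP.1 _ _) (hQ.1 _ _))]
      rw [show (∑ p : Fin N × Fin M, P (a k) p.1 * Q (b k) p.2)
          = (∑ α : Fin N, P (a k) α) * (∑ β : Fin M, Q (b k) β) by
        rw [Finset.sum_mul_sum, Fintype.sum_prod_type]]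
      rw [hP.2, hQ.2, one_mul, ENNReal.ofReal_one]
    rw [this, mul_one]
  have hcover : μ A ≤ ∑ p : Fin N × Fin M, t p := by
    have : A ⊆ ⋃ p : Fin N × Fin M, (A ∩ C p) := by
      intro ω hω
      exact Set.mem_iUnion.mpr ⟨(r (k+1) ω, s (k+1) ω), hω, rfl, rfl⟩
    calc μ A ≤ μ (⋃ p : Fin N × Fin M, (A ∩ C p)) := measure_mono this
      _ ≤ ∑ p : Fin N × Fin M, t p := measure_iUnion_fintype_le μ (fun p => A ∩ C p)
  have hsums : ∑ p : Fin N × Fin M, t p = ∑ p : Fin N × Fin M, u p := by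
    refine le_antisymm (Finset.sum_le_sum (fun p _ => hle p)) ?_
    rw [hsumu]; exact hcover
  intro α β
  have hkey : u (α, β) ≤ t (α, β) := by
    have h1 : t (α, β) + ∑ p ∈ Finset.univ.erase (α, β), t p
        = u (α, β) + ∑ p ∈ Finset.univ.erase (α, β), u p := by
      rw [Finset.add_sum_erase _ t (Finset.mem_univ _),
        Finset.add_sum_erase _ u (Finset.mem_univ _), hsums]
    have h2 : ∑ p ∈ Finset.univ.erase (α, β), t p ≤ ∑ p ∈ Finset.univ.erase (α, β), u p :=
      Finset.sum_le_sum (fun p _ => hle p)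
    have h3 : ∑ p ∈ Finset.univ.erase (α, β), u p ≠ ⊤ := by
      refine ne_top_of_le_ne_top ?_ (Finset.sum_le_sum_of_subset (Finset.erase_subset _ _))
      rw [hsumu]; exact measure_ne_top μ A
    have h4 : u (α, β) + ∑ p ∈ Finset.univ.erase (α, β), u p
        ≤ t (α, β) + ∑ p ∈ Finset.univ.erase (α, β), u p := by
      rw [← h1]; exact add_le_add_right h2 _
    exact (ENNReal.add_le_add_iff_right h3).mp h4
  exact le_antisymm (hle (α, β)) hkey

lemma pair_step_sum (μ : Measure Ω) [IsProbabilityMeasure μ]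
    {r : ℕ → Ω → Fin N} {s : ℕ → Ω → Fin M} {P : Matrix (Fin N) (Fin N) ℝ}
    {Q : Matrix (Fin M) (Fin M) ℝ}
    (hP : RowStochastic P) (hQ : RowStochastic Q) (hM : IsPairMarkov μ r s P Q)
    (k : ℕ) (a : ℕ → Fin N) (b : ℕ → Fin M)
    (hpos : μ {ω | ∀ j ≤ k, r j ω = a j ∧ s j ω = b j} ≠ 0) :
    ∑ p : Fin N × Fin M,
      μ ({ω | ∀ j ≤ k, r j ω = a j ∧ s j ω = b j}
          ∩ {ω | r (k+1) ω = p.1 ∧ s (k+1) ω = p.2})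
      = μ {ω | ∀ j ≤ k, r j ω = a j ∧ s j ω = b j} := by
  have h := pair_step μ hP hQ hM k a b hpos
  calc ∑ p : Fin N × Fin M,
      μ ({ω | ∀ j ≤ k, r j ω = a j ∧ s j ω = b j}
          ∩ {ω | r (k+1) ω = p.1 ∧ s (k+1) ω = p.2})
      = ∑ p : Fin N × Fin M, μ {ω | ∀ j ≤ k, r j ω = a j ∧ s j ω = b j}
          * ENNReal.ofReal (P (a k) p.1 * Q (b k) p.2) := by
        exact Finset.sum_congr rfl (fun p _ => h p.1 p.2)
    _ = μ {ω | ∀ j ≤ k, r j ω = a j ∧ s j ω = b j} := by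
        rw [← Finset.mul_sum]
        rw [← ENNReal.ofReal_sum_of_nonneg (fun p _ => mul_nonneg (hP.1 _ _) (hQ.1 _ _))]
        rw [show (∑ p : Fin N × Fin M, P (a k) p.1 * Q (b k) p.2)
            = (∑ α : Fin N, P (a k) α) * (∑ β : Fin M, Q (b k) β) by
          rw [Finset.sum_mul_sum, Fintype.sum_prod_type]]
        rw [hP.2, hQ.2, one_mul, ENNReal.ofReal_one, mul_one]

end AuxMeas
section AuxHist

open Set

variable {N M : ℕ} {Ω : Type*} [MeasurableSpace Ω]

/-- The event determined by a full history `h` of length `k+1`. -/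
def evSet (r : ℕ → Ω → Fin N) (s : ℕ → Ω → Fin M) (k : ℕ)
    (h : Fin (k+1) → Fin N × Fin M) : Set Ω :=
  {ω | ∀ i : Fin (k+1), r i ω = (h i).1 ∧ s i ω = (h i).2}

/-- Clamped extension of a history to `ℕ`-indexed sequences. -/
def clampA {N M : ℕ} (k : ℕ) (h : Fin (k+1) → Fin N × Fin M) : ℕ → Fin N :=
  fun n => (h ⟨min n k, Nat.lt_succ_of_le (min_le_right n k)⟩).1

def clampB {N M : ℕ} (k : ℕ) (h : Fin (k+1) → Fin N × Fin M) : ℕ → Fin M :=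
  fun n => (h ⟨min n k, Nat.lt_succ_of_le (min_le_right n k)⟩).2

lemma evSet_eq_MSet (r : ℕ → Ω → Fin N) (s : ℕ → Ω → Fin M) (k : ℕ)
    (h : Fin (k+1) → Fin N × Fin M) :
    evSet r s k h = {ω | ∀ j ≤ k, r j ω = clampA k h j ∧ s j ω = clampB k h j} := by
  ext ω
  constructor
  · intro hω j hj
    have := hω ⟨j, Nat.lt_succ_of_le hj⟩
    simp only [clampA, clampB]
    have hmin : (⟨min j k, Nat.lt_succ_of_le (min_le_right j k)⟩ : Fin (k+1))
        = ⟨j, Nat.lt_succ_of_le hj⟩ := Fin.ext (Nat.min_eq_left hj)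
    rw [hmin]
    exact this
  · intro hω i
    have hi : (i : ℕ) ≤ k := Nat.lt_succ_iff.mp i.isLt
    have := hω i hi
    simp only [clampA, clampB] at this
    have hmin : (⟨min (i : ℕ) k, Nat.lt_succ_of_le (min_le_right _ k)⟩ : Fin (k+1)) = i :=
      Fin.ext (Nat.min_eq_left hi)
    rw [hmin] at this
    exact this

lemma clampA_last {N M : ℕ} (k : ℕ) (h : Fin (k+1) → Fin N × Fin M) :
    clampA k h k = (h (Fin.last k)).1 := by
  have he : (⟨min k k, Nat.lt_succ_of_le (min_le_right k k)⟩ : Fin (k+1)) = Fin.last k :=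
    Fin.ext (by simp)
  simp only [clampA, he]

lemma clampB_last {N M : ℕ} (k : ℕ) (h : Fin (k+1) → Fin N × Fin M) :
    clampB k h k = (h (Fin.last k)).2 := by
  have he : (⟨min k k, Nat.lt_succ_of_le (min_le_right k k)⟩ : Fin (k+1)) = Fin.last k :=
    Fin.ext (by simp)
  simp only [clampB, he]

lemma evSet_snoc (r : ℕ → Ω → Fin N) (s : ℕ → Ω → Fin M) (k : ℕ)
    (g : Fin (k+1) → Fin N × Fin M) (x : Fin N × Fin M) :
    evSet r s (k+1) (Fin.snoc g x)
      = evSet r s k g ∩ {ω | r (k+1) ω = x.1 ∧ s (k+1) ω = x.2} := by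
  ext ω
  constructor
  · intro hω
    refine ⟨fun i => ?_, ?_⟩
    · have := hω (Fin.castSucc i)
      rwa [Fin.snoc_castSucc, Fin.coe_castSucc] at this
    · have := hω (Fin.last (k+1))
      rwa [Fin.snoc_last, Fin.val_last] at this
  · rintro ⟨h1, h2⟩ i
    refine Fin.lastCases ?_ ?_ i
    · rw [Fin.snoc_last, Fin.val_last]; exact h2
    · intro j
      rw [Fin.snoc_castSucc, Fin.coe_castSucc]
      exact h1 j

lemma hist_sum (μ : Measure Ω) [IsProbabilityMeasure μ]
    {r : ℕ → Ω → Fin N} {s : ℕ → Ω → Fin M} {P : Matrix (Fin N) (Fin N) ℝ}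
    {Q : Matrix (Fin M) (Fin M) ℝ} {r₀ : Fin N} {s₀ : Fin M}
    (hP : RowStochastic P) (hQ : RowStochastic Q) (hM : IsPairMarkov μ r s P Q)
    (hr0 : ∀ ω, r 0 ω = r₀) (hs0 : ∀ ω, s 0 ω = s₀) :
    ∀ k : ℕ, ∑ h : Fin (k+1) → Fin N × Fin M, μ (evSet r s k h) = 1 := by
  classical
  intro k
  induction k with
  | zero =>
    have hev : ∀ h : Fin 1 → Fin N × Fin M,
        evSet r s 0 h = if h 0 = (r₀, s₀) then univ else (∅ : Set Ω) := by
      intro h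
      by_cases hc : h 0 = (r₀, s₀)
      · rw [if_pos hc]
        ext ω
        simp only [evSet, mem_setOf_eq, mem_univ, iff_true]
        intro i
        rw [Fin.fin_one_eq_zero i, hc]
        exact ⟨hr0 ω, hs0 ω⟩
      · rw [if_neg hc]
        ext ω
        simp only [evSet, mem_setOf_eq, mem_empty_iff_false, iff_false]
        intro hω
        obtain ⟨h1, h2⟩ := hω 0
        simp only [Fin.val_zero] at h1 h2
        apply hc
        have e1 : (h 0).1 = r₀ := by rw [← h1]; exact hr0 ω
        have e2 : (h 0).2 = s₀ := by rw [← h2]; exact hs0 ω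
        exact Prod.ext e1 e2
    calc ∑ h : Fin 1 → Fin N × Fin M, μ (evSet r s 0 h)
        = ∑ h : Fin 1 → Fin N × Fin M,
            (if h 0 = (r₀, s₀) then (1 : ENNReal) else 0) := by
          refine Finset.sum_congr rfl (fun h _ => ?_)
          rw [hev h]
          by_cases hc : h 0 = (r₀, s₀)
          · rw [if_pos hc, if_pos hc]; exact measure_univ
          · rw [if_neg hc, if_neg hc]; exact measure_empty
      _ = ∑ x : Fin N × Fin M, (if x = (r₀, s₀) then (1 : ENNReal) else 0) := by
          exact Fintype.sum_equiv (Equiv.funUnique (Fin 1) (Fin N × Fin M)) _ _ (fun h => rfl)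
      _ = 1 := by rw [Finset.sum_ite_eq' Finset.univ (r₀, s₀) (fun _ => (1 : ENNReal)),
            if_pos (Finset.mem_univ _)]
  | succ n ih =>
    have hsplit : ∑ h : Fin (n+2) → Fin N × Fin M, μ (evSet r s (n+1) h)
        = ∑ p : (Fin N × Fin M) × (Fin (n+1) → Fin N × Fin M),
            μ (evSet r s (n+1) (Fin.snoc p.2 p.1)) := by
      refine (Fintype.sum_equiv (Fin.snocEquiv (fun _ => Fin N × Fin M)) _ _ (fun p => ?_)).symm
      congr 1
    rw [hsplit]
    rw [Fintype.sum_prod_type]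
    rw [Finset.sum_comm]
    have hinner : ∀ g : Fin (n+1) → Fin N × Fin M,
        ∑ x : Fin N × Fin M, μ (evSet r s (n+1) (Fin.snoc g x)) = μ (evSet r s n g) := by
      intro g
      by_cases hg : μ (evSet r s n g) = 0
      · rw [hg]
        refine Finset.sum_eq_zero (fun x _ => ?_)
        refine le_antisymm ?_ (zero_le)
        rw [← hg]
        refine measure_mono ?_
        rw [evSet_snoc]
        exact inter_subset_left
      · have hg' : μ {ω | ∀ j ≤ n, r j ω = clampA n g j ∧ s j ω = clampB n g j} ≠ 0 := by
          rw [← evSet_eq_MSet]; exact hg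
        have := pair_step_sum μ hP hQ hM n (clampA n g) (clampB n g) hg'
        calc ∑ x : Fin N × Fin M, μ (evSet r s (n+1) (Fin.snoc g x))
            = ∑ x : Fin N × Fin M,
                μ ({ω | ∀ j ≤ n, r j ω = clampA n g j ∧ s j ω = clampB n g j}
                  ∩ {ω | r (n+1) ω = x.1 ∧ s (n+1) ω = x.2}) := by
              refine Finset.sum_congr rfl (fun x _ => ?_)
              rw [evSet_snoc, evSet_eq_MSet]
          _ = μ {ω | ∀ j ≤ n, r j ω = clampA n g j ∧ s j ω = clampB n g j} := this
          _ = μ (evSet r s n g) := by rw [← evSet_eq_MSet]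
    calc ∑ g : Fin (n+1) → Fin N × Fin M, ∑ x : Fin N × Fin M,
          μ (evSet r s (n+1) (Fin.snoc g x))
        = ∑ g : Fin (n+1) → Fin N × Fin M, μ (evSet r s n g) :=
          Finset.sum_congr rfl (fun g _ => hinner g)
      _ = 1 := ih

end AuxHist
/-- The extended process `r̄(k) = (r(k), s(k), σ(k), ⌊k+1−τ(k)⌋_T)` is a
time-homogeneous Markov chain on `X̄` with transition matrix `p̄`: for every `k`, every
history `χ₀, …, χ_k` of positive probability and every `χ'`,
`ℙ(r̄(k+1) = χ' ∣ r̄(k) = χ_k, …, r̄(0) = χ₀) = p̄_{χ_k, χ'}`. -/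
theorem rbar_is_time_homogeneous_markov
    {n m N M T : ℕ} [NeZero n] [NeZero m] [NeZero N] [NeZero M] [NeZero T]
    (P : Matrix (Fin N) (Fin N) ℝ) (Q : Matrix (Fin M) (Fin M) ℝ)
    (hP : RowStochastic P) (hQ : RowStochastic Q)
    (Λ : Set (Fin M)) (hΛ : Λ.Nonempty)
    (Ω : Type) [MeasurableSpace Ω] (μ : Measure Ω) [IsProbabilityMeasure μ]
    (r : ℕ → Ω → Fin N) (s : ℕ → Ω → Fin M) (r₀ : Fin N) (s₀ : Fin M)
    (hr0 : ∀ ω, r 0 ω = r₀) (hs0 : ∀ ω, s 0 ω = s₀)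
    (hMarkov : IsPairMarkov μ r s P Q)
    (hinf : μ {ω | {k : ℕ | s k ω ∈ Λ}.Infinite} = 1)
    (τ₀ : ℤ) (hτ₀ : τ₀ < 0) (σ₀ : Fin N)
    (k : ℕ) (χ : ℕ → Fin N × Fin M × Fin N × Fin T)
    (hpos : μ {ω | ∀ j ≤ k, rbar T Λ r s τ₀ σ₀ j ω = χ j} ≠ 0)
    (χ' : Fin N × Fin M × Fin N × Fin T) :
    ProbabilityTheory.cond μ {ω | ∀ j ≤ k, rbar T Λ r s τ₀ σ₀ j ω = χ j}
        {ω | rbar T Λ r s τ₀ σ₀ (k+1) ω = χ'}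
      = ENNReal.ofReal (pbar P Q Λ (χ k) χ') := by
  classical
  obtain ⟨α', β', γ', δ'⟩ := χ'
  set a : ℕ → Fin N := fun j => (χ j).1 with ha
  set b : ℕ → Fin M := fun j => (χ j).2.1 with hb
  set A : Set Ω := {ω | ∀ j ≤ k, r j ω = a j ∧ s j ω = b j} with hA
  -- the conditioning event is nonempty
  obtain ⟨ω₀, hω₀⟩ : {ω | ∀ j ≤ k, rbar T Λ r s τ₀ σ₀ j ω = χ j}.Nonempty :=
    nonempty_of_measure_ne_zero hpos
  have hω₀A : ω₀ ∈ A := by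
    intro j hj
    exact ⟨congrArg Prod.fst (hω₀ j hj), congrArg (fun x => x.2.1) (hω₀ j hj)⟩
  have hEA : {ω | ∀ j ≤ k, rbar T Λ r s τ₀ σ₀ j ω = χ j} = A := by
    apply Set.Subset.antisymm
    · intro ω hω j hj
      exact ⟨congrArg Prod.fst (hω j hj), congrArg (fun x => x.2.1) (hω j hj)⟩
    · intro ω hω j hj
      have hrag : ∀ i, i ≤ j → r i ω = r i ω₀ := fun i hi =>
        ((hω i (le_trans hi hj)).1).trans ((hω₀A i (le_trans hi hj)).1).symm
      have hsag : ∀ i, i ≤ j → s i ω = s i ω₀ := fun i hi =>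
        ((hω i (le_trans hi hj)).2).trans ((hω₀A i (le_trans hi hj)).2).symm
      exact (rbar_congr hrag hsag).trans (hω₀ j hj)
  rw [hEA]
  have hpos' : μ A ≠ 0 := by rw [← hEA]; exact hpos
  have hχk : χ k = rbar T Λ r s τ₀ σ₀ k ω₀ := (hω₀ k le_rfl).symm
  have hσk : (χ k).2.2.1 = sigmaProc Λ r s σ₀ k ω₀ := congrArg (fun x => x.2.2.1) hχk
  have hδk : (χ k).2.2.2 = flT T ((k : ℤ) + 1 - tauProc Λ s τ₀ k ω₀) :=
    congrArg (fun x => x.2.2.2) hχk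
  by_cases hβ : β' ∈ Λ
  · by_cases hm : α' = γ' ∧ δ' = flT T 1
    · have hB : {ω | rbar T Λ r s τ₀ σ₀ (k+1) ω = (α', β', γ', δ')}
          = {ω | r (k+1) ω = α' ∧ s (k+1) ω = β'} := by
        ext ω
        simp only [Set.mem_setOf_eq]
        constructor
        · intro hω
          exact ⟨congrArg Prod.fst hω, congrArg (fun x => x.2.1) hω⟩
        · rintro ⟨h1, h2⟩
          have hmem : s (k+1) ω ∈ Λ := by rw [h2]; exact hβ
          rw [rbar_succ_mem hmem, h1, h2, hm.1, ← hm.2]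
      rw [hB, hMarkov k a b hpos' α' β']
      congr 1
      simp only [pbar, ha, hb]
      rw [if_pos hβ, if_pos (by exact hm : (α', β', γ', δ').1 = (α', β', γ', δ').2.2.1
        ∧ (α', β', γ', δ').2.2.2 = flT T 1)]
    · have hB : {ω | rbar T Λ r s τ₀ σ₀ (k+1) ω = (α', β', γ', δ')} = (∅ : Set Ω) := by
        ext ω
        simp only [Set.mem_setOf_eq, Set.mem_empty_iff_false, iff_false]
        intro hω
        have h2 : s (k+1) ω = β' := congrArg (fun x => x.2.1) hω
        have hmem : s (k+1) ω ∈ Λ := by rw [h2]; exact hβ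
        rw [rbar_succ_mem hmem] at hω
        apply hm
        refine ⟨?_, (congrArg (fun x => x.2.2.2) hω : flT T 1 = δ').symm⟩
        have e1 : r (k+1) ω = α' := congrArg Prod.fst hω
        have e2 : r (k+1) ω = γ' := congrArg (fun x => x.2.2.1) hω
        rw [← e1, e2]
      rw [hB]
      have h0 : ProbabilityTheory.cond μ A (∅ : Set Ω) = 0 := measure_empty
      rw [h0]
      simp only [pbar]
      rw [if_pos hβ, if_neg (by exact hm : ¬((α', β', γ', δ').1 = (α', β', γ', δ').2.2.1
        ∧ (α', β', γ', δ').2.2.2 = flT T 1)), ENNReal.ofReal_zero]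
  · set C : Set Ω := {ω | r (k+1) ω = α' ∧ s (k+1) ω = β'} with hCdef
    set B : Set Ω := {ω | rbar T Λ r s τ₀ σ₀ (k+1) ω = (α', β', γ', δ')} with hBdef
    have hBC : B ⊆ C := fun ω hω =>
      ⟨congrArg Prod.fst hω, congrArg (fun x => x.2.1) hω⟩
    by_cases hm : γ' = (χ k).2.2.1 ∧ δ' = (χ k).2.2.2 + 1
    · have hACsub : A ∩ C ⊆ B := by
        rintro ω ⟨hωA, h1, h2⟩
        have hmem : s (k+1) ω ∉ Λ := by rw [h2]; exact hβ
        show rbar T Λ r s τ₀ σ₀ (k+1) ω = (α', β', γ', δ')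
        have hrag : ∀ i, i ≤ k → r i ω = r i ω₀ := fun i hi =>
          ((hωA i hi).1).trans ((hω₀A i hi).1).symm
        have hsag : ∀ i, i ≤ k → s i ω = s i ω₀ := fun i hi =>
          ((hωA i hi).2).trans ((hω₀A i hi).2).symm
        rw [rbar_succ_not hmem, h1, h2, sigmaProc_congr hrag hsag, tauProc_congr hsag,
          show sigmaProc Λ r s σ₀ k ω₀ = γ' from (hσk.symm).trans hm.1.symm,
          show flT T ((k : ℤ) + 1 - tauProc Λ s τ₀ k ω₀) + 1 = δ' by
            rw [← hδk]; exact hm.2.symm]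
      have hrest : μ.restrict A B = μ A * ENNReal.ofReal (P (a k) α' * Q (b k) β') := by
        refine le_antisymm ?_ ?_
        · calc μ.restrict A B ≤ μ.restrict A C := measure_mono hBC
            _ = _ := restrict_C μ hMarkov k a b hpos' α' β'
        · calc μ A * ENNReal.ofReal (P (a k) α' * Q (b k) β')
              = μ (A ∩ C) := (pair_step μ hP hQ hMarkov k a b hpos' α' β').symm
            _ ≤ μ (B ∩ A) := measure_mono (fun ω hω => ⟨hACsub hω, hω.1⟩)
            _ ≤ μ.restrict A B := Measure.le_restrict_apply _ _
      show ProbabilityTheory.cond μ A B = _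
      rw [ProbabilityTheory.cond, Measure.smul_apply, smul_eq_mul, hrest, ← mul_assoc,
        ENNReal.inv_mul_cancel hpos' (measure_ne_top μ A), one_mul]
      simp only [pbar, ha, hb]
      rw [if_neg hβ, if_pos (by exact hm : (α', β', γ', δ').2.2.1 = (χ k).2.2.1
        ∧ (α', β', γ', δ').2.2.2 = (χ k).2.2.2 + 1)]
    · -- unmatched case: the event is incompatible with the observed history
      set D : Set Ω := {ω | ω ∉ A ∧ sigmaProc Λ r s σ₀ k ω = γ'
          ∧ flT T ((k : ℤ) + 1 - tauProc Λ s τ₀ k ω) + 1 = δ'} with hDdef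
      have hBD : B ⊆ D := by
        intro ω hω
        have h2 : s (k+1) ω = β' := congrArg (fun x => x.2.1) hω
        have hmem : s (k+1) ω ∉ Λ := by rw [h2]; exact hβ
        have hω' := hω
        rw [Set.mem_setOf_eq, rbar_succ_not hmem] at hω'
        have hσ : sigmaProc Λ r s σ₀ k ω = γ' := congrArg (fun x => x.2.2.1) hω'
        have hδ : flT T ((k : ℤ) + 1 - tauProc Λ s τ₀ k ω) + 1 = δ' :=
          congrArg (fun x => x.2.2.2) hω'
        refine ⟨?_, hσ, hδ⟩
        intro hωA
        apply hm
        have hrag : ∀ i, i ≤ k → r i ω = r i ω₀ := fun i hi =>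
          ((hωA i hi).1).trans ((hω₀A i hi).1).symm
        have hsag : ∀ i, i ≤ k → s i ω = s i ω₀ := fun i hi =>
          ((hωA i hi).2).trans ((hω₀A i hi).2).symm
        constructor
        · rw [← hσ, sigmaProc_congr hrag hsag]; exact hσk.symm
        · rw [← hδ, tauProc_congr hsag, ← hδk]
      set h0 : Fin (k+1) → Fin N × Fin M := fun i => (a i, b i) with hh0def
      have hAev : evSet r s k h0 = A := by
        ext ω
        constructor
        · intro hω j hj
          exact hω ⟨j, Nat.lt_succ_of_le hj⟩
        · intro hω i
          exact hω i (Nat.lt_succ_iff.mp i.isLt)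
      have hsum := hist_sum μ hP hQ hMarkov hr0 hs0 k
      set Hbad : Finset (Fin (k+1) → Fin N × Fin M) :=
        Finset.univ.filter (fun h => evSet r s k h ⊆ D) with hHbad
      have hDcup : D ⊆ ⋃ h ∈ Hbad, evSet r s k h := by
        intro ω hω
        have hmemh : ω ∈ evSet r s k (fun i => (r i ω, s i ω)) := fun i => ⟨rfl, rfl⟩
        refine Set.mem_biUnion (Finset.mem_filter.mpr ⟨Finset.mem_univ _, ?_⟩) hmemh
        intro ω' hω'
        have hrag : ∀ i, i ≤ k → r i ω' = r i ω := fun i hi =>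
          (hω' ⟨i, Nat.lt_succ_of_le hi⟩).1
        have hsag : ∀ i, i ≤ k → s i ω' = s i ω := fun i hi =>
          (hω' ⟨i, Nat.lt_succ_of_le hi⟩).2
        obtain ⟨hnA, hσ, hδ⟩ := hω
        refine ⟨?_, ?_, ?_⟩
        · intro hA'
          apply hnA
          intro j hj
          exact ⟨(hrag j hj).symm.trans (hA' j hj).1, (hsag j hj).symm.trans (hA' j hj).2⟩
        · rw [sigmaProc_congr hrag hsag]; exact hσ
        · rw [tauProc_congr hsag]; exact hδ
      have hh0bad : h0 ∉ Hbad := by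
        intro hmemHbad
        have hsub : evSet r s k h0 ⊆ D := (Finset.mem_filter.mp hmemHbad).2
        have hω₀ev : ω₀ ∈ evSet r s k h0 := by rw [hAev]; exact hω₀A
        exact (hsub hω₀ev).1 hω₀A
      have hJsum : ∑ h ∈ insert h0 Hbad, μ (evSet r s k h) ≤ μ (⋃ h ∈ insert h0 Hbad, evSet r s k h) := by
        have h1 : (1 : ENNReal) ≤ μ (⋃ h ∈ insert h0 Hbad, evSet r s k h)
            + ∑ h ∈ (insert h0 Hbad)ᶜ, μ (evSet r s k h) := by
          have hcov : (Set.univ : Set Ω)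
              ⊆ (⋃ h ∈ insert h0 Hbad, evSet r s k h) ∪ (⋃ h ∈ (insert h0 Hbad)ᶜ, evSet r s k h) := by
            intro ω _
            by_cases hJm : (fun i => (r i ω, s i ω) : Fin (k+1) → Fin N × Fin M) ∈ insert h0 Hbad
            · exact Or.inl (Set.mem_biUnion hJm (fun i => ⟨rfl, rfl⟩))
            · exact Or.inr (Set.mem_biUnion (Finset.mem_compl.mpr hJm) (fun i => ⟨rfl, rfl⟩))
          calc (1 : ENNReal) = μ Set.univ := measure_univ.symm
            _ ≤ μ ((⋃ h ∈ insert h0 Hbad, evSet r s k h) ∪ (⋃ h ∈ (insert h0 Hbad)ᶜ, evSet r s k h)) :=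
              measure_mono hcov
            _ ≤ μ (⋃ h ∈ insert h0 Hbad, evSet r s k h) + μ (⋃ h ∈ (insert h0 Hbad)ᶜ, evSet r s k h) :=
              measure_union_le _ _
            _ ≤ μ (⋃ h ∈ insert h0 Hbad, evSet r s k h) + ∑ h ∈ (insert h0 Hbad)ᶜ, μ (evSet r s k h) :=
              add_le_add_right (measure_biUnion_finset_le _ _) _
        have h2 : ∑ h ∈ insert h0 Hbad, μ (evSet r s k h) + ∑ h ∈ (insert h0 Hbad)ᶜ, μ (evSet r s k h) = 1 := by
          rw [Finset.sum_add_sum_compl]; exact hsum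
        have h3 : ∑ h ∈ (insert h0 Hbad)ᶜ, μ (evSet r s k h) ≠ ⊤ :=
          ne_top_of_le_ne_top ENNReal.one_ne_top (le_add_self.trans_eq h2)
        exact (ENNReal.add_le_add_iff_right h3).mp (h2.le.trans h1)
      have hADge : μ A + μ D ≤ μ (A ∪ D) := by
        have hsub2 : ⋃ h ∈ insert h0 Hbad, evSet r s k h ⊆ A ∪ D := by
          intro ω hω
          obtain ⟨h, hh, hmem⟩ := Set.mem_iUnion₂.mp hω
          rcases Finset.mem_insert.mp hh with he | he
          · left; rw [← hAev, ← he]; exact hmem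
          · right; exact (Finset.mem_filter.mp he).2 hmem
        calc μ A + μ D
            ≤ μ (evSet r s k h0) + ∑ h ∈ Hbad, μ (evSet r s k h) := by
              refine add_le_add ?_ ?_
              · rw [hAev]
              · calc μ D ≤ μ (⋃ h ∈ Hbad, evSet r s k h) := measure_mono hDcup
                  _ ≤ ∑ h ∈ Hbad, μ (evSet r s k h) := measure_biUnion_finset_le _ _
          _ = ∑ h ∈ insert h0 Hbad, μ (evSet r s k h) := (Finset.sum_insert (f := fun h => μ (evSet r s k h)) hh0bad).symm
          _ ≤ μ (⋃ h ∈ insert h0 Hbad, evSet r s k h) := hJsum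
          _ ≤ μ (A ∪ D) := measure_mono hsub2
      have hcap : μ (toMeasurable μ A ∩ toMeasurable μ D) = 0 := by
        have h1 : μ (toMeasurable μ A ∪ toMeasurable μ D)
            + μ (toMeasurable μ A ∩ toMeasurable μ D)
            = μ (toMeasurable μ A) + μ (toMeasurable μ D) :=
          measure_union_add_inter _ (measurableSet_toMeasurable μ D)
        rw [measure_toMeasurable, measure_toMeasurable] at h1
        have h4 : μ A + μ D ≤ μ (toMeasurable μ A ∪ toMeasurable μ D) :=
          hADge.trans (measure_mono
            (Set.union_subset_union (subset_toMeasurable μ A) (subset_toMeasurable μ D)))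
        have h5 : μ (toMeasurable μ A ∪ toMeasurable μ D)
            + μ (toMeasurable μ A ∩ toMeasurable μ D)
            ≤ μ (toMeasurable μ A ∪ toMeasurable μ D) + 0 := by
          rw [add_zero, h1]; exact h4
        exact le_antisymm
          ((ENNReal.add_le_add_iff_left (measure_ne_top μ _)).mp h5) (zero_le)
      have hrB : μ.restrict A B = 0 := by
        refine le_antisymm ?_ (zero_le)
        calc μ.restrict A B ≤ μ.restrict A (toMeasurable μ D) :=
              measure_mono (hBD.trans (subset_toMeasurable μ D))
          _ = μ (toMeasurable μ D ∩ A) :=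
              Measure.restrict_apply (measurableSet_toMeasurable μ D)
          _ ≤ μ (toMeasurable μ A ∩ toMeasurable μ D) :=
              measure_mono (fun ω hω => ⟨subset_toMeasurable μ A hω.2, hω.1⟩)
          _ = 0 := hcap
      show ProbabilityTheory.cond μ A B = _
      rw [ProbabilityTheory.cond, Measure.smul_apply, smul_eq_mul, hrB, mul_zero]
      simp only [pbar]
      rw [if_neg hβ, if_neg (by exact hm : ¬((α', β', γ', δ').2.2.1 = (χ k).2.2.1
        ∧ (α', β', γ', δ').2.2.2 = (χ k).2.2.2 + 1)), ENNReal.ofReal_zero]
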